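/- A language L ⊆ Σ* is star-free if and only if L is ADT-definable, i.e., L = ⟦t⟧ for some adt t over Prop. -/

import Mathlib

namespace ADTpaper

/-- Propositional formulas over a set `P` of propositional variables. -/
inductive PropForm (P : Type) : Type where
  | var : P → PropForm P
  | tru : PropForm P
  | fls : PropForm P
  | neg : PropForm P → PropForm P
  | conj : PropForm P → PropForm P → PropForm P
  | disj : PropForm P → PropForm P → PropForm P

/-- A valuation is a subset of `P` (an element of the alphabet `Σ = 2^P`). -/
abbrev Val (P : Type) : Type := Set P

/-- A trace is a finite word over the alphabet `Σ = 2^P`. -/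
abbrev Trace (P : Type) : Type := List (Val P)

/-- Satisfaction of a propositional formula by a valuation. -/
def PropForm.eval {P : Type} (v : Val P) : PropForm P → Prop
  | .var p => p ∈ v
  | .tru => True
  | .fls => False
  | .neg φ => ¬ PropForm.eval v φ
  | .conj φ ψ => PropForm.eval v φ ∧ PropForm.eval v ψ
  | .disj φ ψ => PropForm.eval v φ ∨ PropForm.eval v ψ

/-- Size of a propositional formula. -/
def PropForm.size {P : Type} : PropForm P → ℕ
  | .var _ => 1
  | .tru => 1
  | .fls => 1
  | .neg φ => PropForm.size φ + 1
  | .conj φ ψ => PropForm.size φ + PropForm.size ψ + 1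
  | .disj φ ψ => PropForm.size φ + PropForm.size ψ + 1

/-- Attack-defense trees over `P` (operators taken binary, w.l.o.g. by associativity). -/
inductive ADT (P : Type) : Type where
  | eps  : ADT P
  | leaf : PropForm P → ADT P
  | orA  : ADT P → ADT P → ADT P
  | sand : ADT P → ADT P → ADT P
  | andA : ADT P → ADT P → ADT P
  | cm   : ADT P → ADT P → ADT P

/-- Trace semantics of an adt: a language over the alphabet `Σ = 2^P`. -/
def sem {P : Type} : ADT P → Language (Val P)
  | .eps => 1
  | .leaf γ => {w | ∃ w' v, w = w' ++ [v] ∧ PropForm.eval v γ}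
  | .orA t₁ t₂ => sem t₁ ⊔ sem t₂
  | .sand t₁ t₂ => sem t₁ * sem t₂
  | .andA t₁ t₂ => (sem t₁ * ⊤ ⊓ sem t₂) ⊔ (sem t₂ * ⊤ ⊓ sem t₁)
  | .cm t₁ t₂ => sem t₁ \ sem t₂

/-- Countermeasure-depth of an adt. -/
def cd {P : Type} : ADT P → ℕ
  | .eps => 0
  | .leaf _ => 0
  | .orA t₁ t₂ => max (cd t₁) (cd t₂)
  | .sand t₁ t₂ => max (cd t₁) (cd t₂)
  | .andA t₁ t₂ => max (cd t₁) (cd t₂)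
  | .cm t₁ t₂ => max (cd t₁) (cd t₂ + 1)

/-- The size of an adt: the sum of the sizes of its leaves, the leaf `ε` having size 1. -/
def ADT.size {P : Type} : ADT P → ℕ
  | .eps => 1
  | .leaf γ => PropForm.size γ
  | .orA t₁ t₂ => ADT.size t₁ + ADT.size t₂
  | .sand t₁ t₂ => ADT.size t₁ + ADT.size t₂
  | .andA t₁ t₂ => ADT.size t₁ + ADT.size t₂
  | .cm t₁ t₂ => ADT.size t₁ + ADT.size t₂


/-- The class of star-free languages over an alphabet `α`: the smallest class containing
all finite languages and closed under union, intersection, complement and concatenation. -/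
inductive IsStarFree {α : Type} : Language α → Prop where
  | finite {L : Language α} : Set.Finite (L : Set (List α)) → IsStarFree L
  | union {L₁ L₂ : Language α} : IsStarFree L₁ → IsStarFree L₂ → IsStarFree (L₁ ⊔ L₂)
  | inter {L₁ L₂ : Language α} : IsStarFree L₁ → IsStarFree L₂ → IsStarFree (L₁ ⊓ L₂)
  | compl {L : Language α} : IsStarFree L → IsStarFree Lᶜ
  | concat {L₁ L₂ : Language α} : IsStarFree L₁ → IsStarFree L₂ → IsStarFree (L₁ * L₂)

section Aux

variable {P : Type}

open Classical in
/-- Literal for `p` fixing its truth value to the one in `v`. -/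
noncomputable def lit (v : Val P) (p : P) : PropForm P :=
  if p ∈ v then .var p else .neg (.var p)

lemma eval_lit (v v' : Val P) (p : P) :
    PropForm.eval v' (lit v p) ↔ (p ∈ v' ↔ p ∈ v) := by
  by_cases h : p ∈ v <;> simp [lit, h, PropForm.eval]

/-- Conjunction of a list of formulas. -/
def conjList : List (PropForm P) → PropForm P
  | [] => .tru
  | φ :: l => .conj φ (conjList l)

lemma eval_conjList (v : Val P) (l : List (PropForm P)) :
    PropForm.eval v (conjList l) ↔ ∀ φ ∈ l, PropForm.eval v φ := by
  induction l with
  | nil => simp [conjList, PropForm.eval]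
  | cons φ l ih => simp [conjList, PropForm.eval, ih]

/-- A formula characterizing exactly the valuation `v`. -/
noncomputable def exactForm [Fintype P] (v : Val P) : PropForm P :=
  conjList ((Finset.univ : Finset P).toList.map (lit v))

lemma eval_exactForm [Fintype P] (v v' : Val P) :
    PropForm.eval v' (exactForm v) ↔ v' = v := by
  constructor
  · intro h
    ext p
    have := (eval_conjList v' _).1 h (lit v p) (List.mem_map.2 ⟨p, by simp, rfl⟩)
    exact (eval_lit v v' p).1 this
  · rintro rfl
    refine (eval_conjList _ _).2 ?_
    rintro φ hφ
    rcases List.mem_map.1 hφ with ⟨p, -, rfl⟩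
    exact (eval_lit _ _ p).2 Iff.rfl

lemma mem_leaf {γ : PropForm P} {w : Trace P} :
    w ∈ sem (.leaf γ : ADT P) ↔ ∃ w' u, w = w' ++ [u] ∧ PropForm.eval u γ := Iff.rfl

lemma mem_leaf_tru {w : Trace P} : w ∈ sem (.leaf .tru : ADT P) ↔ w ≠ [] := by
  rw [mem_leaf]
  constructor
  · rintro ⟨w', u, rfl, -⟩; simp
  · intro h
    rcases List.eq_nil_or_concat' w with rfl | ⟨w', u, rfl⟩
    · exact absurd rfl h
    · exact ⟨w', u, rfl, trivial⟩

lemma mem_two {w : Trace P} :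
    w ∈ sem (.sand (.leaf .tru) (.leaf .tru) : ADT P) ↔ 2 ≤ w.length := by
  show w ∈ sem (.leaf .tru : ADT P) * sem (.leaf .tru : ADT P) ↔ _
  rw [Language.mem_mul]
  constructor
  · rintro ⟨a, ha, b, hb, rfl⟩
    rw [mem_leaf_tru] at ha hb
    have ha' : 1 ≤ a.length := List.length_pos_iff.2 ha
    have hb' : 1 ≤ b.length := List.length_pos_iff.2 hb
    rw [List.length_append]; omega
  · intro h
    match w, h with
    | a :: b :: rest, _ =>
      refine ⟨[a], ?_, b :: rest, ?_, rfl⟩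
      · rw [mem_leaf_tru]; simp
      · rw [mem_leaf_tru]; simp

/-- An adt whose semantics is exactly the one-letter word `[v]`. -/
noncomputable def letterADT [Fintype P] (v : Val P) : ADT P :=
  .cm (.leaf (exactForm v)) (.sand (.leaf .tru) (.leaf .tru))

lemma sem_letterADT [Fintype P] (v : Val P) :
    sem (letterADT v) = ({[v]} : Language (Val P)) := by
  ext w
  show w ∈ sem (.leaf (exactForm v)) \ sem (.sand (.leaf .tru) (.leaf .tru) : ADT P) ↔ _
  show w ∈ sem (.leaf (exactForm v)) ∧ w ∉ sem (.sand (.leaf .tru) (.leaf .tru) : ADT P) ↔ w = [v]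
  rw [mem_leaf]
  constructor
  · rintro ⟨⟨w', u, rfl, hu⟩, hn⟩
    rw [eval_exactForm] at hu
    subst hu
    rw [mem_two, not_le, List.length_append] at hn
    simp only [List.length_singleton] at hn
    have : w' = [] := List.eq_nil_of_length_eq_zero (by omega)
    subst this
    rfl
  · rintro rfl
    refine ⟨⟨[], v, rfl, (eval_exactForm v v).2 rfl⟩, ?_⟩
    rw [mem_two]
    simp

/-- An adt whose semantics is exactly the singleton `{w}`. -/
noncomputable def wordADT [Fintype P] : Trace P → ADT P
  | [] => .eps
  | v :: w => .sand (letterADT v) (wordADT w)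

lemma sem_wordADT [Fintype P] (w : Trace P) :
    sem (wordADT w) = ({w} : Language (Val P)) := by
  induction w with
  | nil =>
    ext x
    show x ∈ (1 : Language (Val P)) ↔ _
    rw [Language.mem_one]; exact Iff.rfl
  | cons v w ih =>
    ext x
    show x ∈ sem (letterADT v) * sem (wordADT w) ↔ _
    rw [sem_letterADT, ih, Language.mem_mul]
    show (∃ a ∈ ({[v]} : Language (Val P)), ∃ b ∈ ({w} : Language (Val P)), a ++ b = x) ↔ x = v :: w
    constructor
    · rintro ⟨a, ha, b, hb, rfl⟩
      have ha' : a = [v] := ha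
      have hb' : b = w := hb
      subst ha'; subst hb'; rfl
    · rintro rfl
      exact ⟨[v], rfl, w, rfl, rfl⟩

lemma finite_ADT_definable [Fintype P] (L : Language (Val P)) (hL : Set.Finite (L : Set (Trace P))) :
    ∃ t : ADT P, sem t = L := by
  refine Set.Finite.induction_on (motive := fun s _ => ∃ t : ADT P, sem t = s) _ hL ⟨.cm .eps .eps, by
    exact (sdiff_self : (1 : Language (Val P)) \ 1 = ⊥)⟩ ?_
  rintro a s _ _ ⟨t, ht⟩
  refine ⟨.orA (wordADT a) t, ?_⟩
  show sem (wordADT a) ⊔ sem t = _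
  rw [sem_wordADT, ht]
  exact (Set.insert_eq a s).symm

lemma sem_top [Fintype P] : sem (.orA .eps (.leaf .tru) : ADT P) = (⊤ : Language (Val P)) := by
  ext w
  show w ∈ (1 : Language (Val P)) ⊔ sem (.leaf .tru : ADT P) ↔ _
  constructor
  · intro _; trivial
  · intro _
    rcases eq_or_ne w [] with rfl | h
    · exact Or.inl ((Language.mem_one _).2 rfl)
    · exact Or.inr (mem_leaf_tru.2 h)

lemma top_starfree {α : Type} : IsStarFree (⊤ : Language α) := by
  have h : IsStarFree ((⊥ : Language α)ᶜ) := .compl (.finite (Set.finite_empty))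
  rwa [compl_bot] at h

lemma sem_starfree [Fintype P] (t : ADT P) : IsStarFree (sem t) := by
  induction t with
  | eps =>
    apply IsStarFree.finite
    have h : (sem (.eps : ADT P) : Set (Trace P)) = {([] : Trace P)} := by
      ext w
      show w ∈ (1 : Language (Val P)) ↔ _
      rw [Language.mem_one]; exact Iff.rfl
    rw [h]
    exact Set.finite_singleton _
  | leaf γ =>
    let S : Language (Val P) := {w : Trace P | ∃ v, PropForm.eval v γ ∧ w = [v]}
    have h : sem (.leaf γ : ADT P) = (⊤ : Language (Val P)) * S := by
      ext w
      rw [mem_leaf, Language.mem_mul]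
      constructor
      · rintro ⟨w', v, rfl, hv⟩
        exact ⟨w', trivial, [v], ⟨v, hv, rfl⟩, rfl⟩
      · rintro ⟨a, -, b, ⟨v, hv, rfl⟩, rfl⟩
        exact ⟨a, v, rfl, hv⟩
    rw [h]
    refine .concat top_starfree (.finite ?_)
    show Set.Finite {w : Trace P | ∃ v, PropForm.eval v γ ∧ w = [v]}
    have himg : {w : Trace P | ∃ v, PropForm.eval v γ ∧ w = [v]}
        = (fun v : Val P => [v]) '' {v : Val P | PropForm.eval v γ} := by
      ext w
      simp only [Set.mem_setOf_eq, Set.mem_image]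
      constructor
      · rintro ⟨v, hv, rfl⟩; exact ⟨v, hv, rfl⟩
      · rintro ⟨v, hv, rfl⟩; exact ⟨v, hv, rfl⟩
    rw [himg]
    exact Set.Finite.image _ (Set.toFinite _)
  | orA t₁ t₂ ih₁ ih₂ => exact .union ih₁ ih₂
  | sand t₁ t₂ ih₁ ih₂ => exact .concat ih₁ ih₂
  | andA t₁ t₂ ih₁ ih₂ =>
    exact .union (.inter (.concat ih₁ top_starfree) ih₂)
      (.inter (.concat ih₂ top_starfree) ih₁)
  | cm t₁ t₂ ih₁ ih₂ =>
    have h : sem (.cm t₁ t₂) = sem t₁ ⊓ (sem t₂)ᶜ := sdiff_eq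
    rw [h]
    exact .inter ih₁ (.compl ih₂)

end Aux

/-- A language over `Σ = 2^P` is star-free iff it is ADT-definable. -/
theorem starfree_iff_ADT_definable {P : Type} [Fintype P] (L : Language (Val P)) :
    IsStarFree L ↔ ∃ t : ADT P, sem t = L := by
  constructor
  · intro h
    induction h with
    | finite hf => exact finite_ADT_definable _ hf
    | union _ _ ih₁ ih₂ =>
      rcases ih₁ with ⟨t₁, rfl⟩; rcases ih₂ with ⟨t₂, rfl⟩
      exact ⟨.orA t₁ t₂, rfl⟩
    | inter _ _ ih₁ ih₂ =>
      rcases ih₁ with ⟨t₁, rfl⟩; rcases ih₂ with ⟨t₂, rfl⟩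
      refine ⟨.cm t₁ (.cm t₁ t₂), ?_⟩
      show sem t₁ \ (sem t₁ \ sem t₂) = _
      exact sdiff_sdiff_right_self
    | compl _ ih =>
      rcases ih with ⟨t, rfl⟩
      refine ⟨.cm (.orA .eps (.leaf .tru)) t, ?_⟩
      show sem (.orA .eps (.leaf .tru)) \ sem t = _
      rw [sem_top]
      exact top_sdiff' _
    | concat _ _ ih₁ ih₂ =>
      rcases ih₁ with ⟨t₁, rfl⟩; rcases ih₂ with ⟨t₂, rfl⟩
      exact ⟨.sand t₁ t₂, rfl⟩
  · rintro ⟨t, rfl⟩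
    exact sem_starfree t

end ADTpaper
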